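/- Let S be a nonempty connected topological space, let φ : S → ℝ be continuous with m = inf_{x∈S} φ(x) and M = sup_{x∈S} φ(x) satisfying 0 < m < M < ∞, and let β ∈ [0,2π). Then the closure in ℝ of the set { (β + 2πk)/φ(x) : x ∈ S, k ∈ ℤ } equals (⋃_{k ≤ -1} [(β+2πk)/m, (β+2πk)/M]) ∪ (⋃_{k ≥ 0} [(β+2πk)/M, (β+2πk)/m]). -/

import Mathlib

open Filter Topology

/-- Let `S` be a nonempty connected topological space, `φ : S → ℝ` continuous
with infimum `m` and supremum `M` over `S` satisfying `0 < m < M < ∞`, and let `β ∈ [0, 2π)`.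
Then the closure of `{(β + 2πk)/φ(x) : x ∈ S, k ∈ ℤ}` is
`(⋃_{k ≤ -1} [(β+2πk)/m, (β+2πk)/M]) ∪ (⋃_{k ≥ 0} [(β+2πk)/M, (β+2πk)/m])`. -/
theorem stmt_6 {S : Type*} [TopologicalSpace S] [ConnectedSpace S]
    (φ : S → ℝ) (hφ : Continuous φ) (m M : ℝ)
    (hm : IsGLB (Set.range φ) m) (hM : IsLUB (Set.range φ) M)
    (hm_pos : 0 < m) (hmM : m < M)
    (β : ℝ) (hβ : β ∈ Set.Ico (0:ℝ) (2 * Real.pi)) :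
    closure {y : ℝ | ∃ (x : S) (k : ℤ), y = (β + 2 * Real.pi * k) / φ x} =
      (⋃ k ∈ {k : ℤ | k ≤ -1},
        Set.Icc ((β + 2 * Real.pi * k) / m) ((β + 2 * Real.pi * k) / M)) ∪
      (⋃ k ∈ {k : ℤ | 0 ≤ k},
        Set.Icc ((β + 2 * Real.pi * k) / M) ((β + 2 * Real.pi * k) / m)) := by
  obtain ⟨hβ0, hβ2π⟩ := hβ
  have hπ : (0:ℝ) < Real.pi := Real.pi_pos
  have hM_pos : 0 < M := hm_pos.trans hmM
  set c : ℤ → ℝ := fun k => β + 2 * Real.pi * k with hc_def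
  set f : ℤ → Set ℝ := fun k => (fun t => c k / t) '' Set.range φ with hf_def
  have hrange : Set.range φ ⊆ Set.Icc m M := fun t ht => ⟨hm.1 ht, hM.1 ht⟩
  -- rewrite the set as a union over k
  have hset : {y : ℝ | ∃ (x : S) (k : ℤ), y = c k / φ x} = ⋃ k, f k := by
    ext y
    simp only [Set.mem_setOf_eq, Set.mem_iUnion, hf_def, Set.mem_image, Set.mem_range]
    constructor
    · rintro ⟨x, k, rfl⟩; exact ⟨k, φ x, ⟨x, rfl⟩, rfl⟩
    · rintro ⟨k, t, ⟨x, rfl⟩, rfl⟩; exact ⟨x, k, rfl⟩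
  -- closure of the range is the full interval
  have hclos : closure (Set.range φ) = Set.Icc m M := by
    apply subset_antisymm (closure_minimal hrange isClosed_Icc)
    have hIoo : Set.Ioo m M ⊆ Set.range φ := by
      intro y hy
      obtain ⟨a, ha, hay⟩ : ∃ a ∈ Set.range φ, a < y := by
        by_contra h; push_neg at h
        exact absurd (hm.2 fun t ht => h t ht) (not_le.2 hy.1)
      obtain ⟨b, hb, hyb⟩ : ∃ b ∈ Set.range φ, y < b := by
        by_contra h; push_neg at h
        exact absurd (hM.2 fun t ht => h t ht) (not_le.2 hy.2)
      exact (isPreconnected_range hφ).Icc_subset ha hb ⟨hay.le, hyb.le⟩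
    calc Set.Icc m M = closure (Set.Ioo m M) := (closure_Ioo hmM.ne).symm
      _ ⊆ closure (Set.range φ) := closure_mono hIoo
  have hcont : ∀ a : ℝ, ContinuousOn (fun t => a / t) (Set.Icc m M) := fun a =>
    continuousOn_const.div continuousOn_id fun t ht => (hm_pos.trans_le ht.1).ne'
  -- closure of each piece
  have hkey : ∀ k : ℤ, closure (f k) = (fun t => c k / t) '' Set.Icc m M := by
    intro k
    apply subset_antisymm
    · exact closure_minimal (Set.image_mono hrange)
        ((isCompact_Icc.image_of_continuousOn (hcont _)).isClosed)
    · have h1 := hcont (c k)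
      rw [← hclos] at h1 ⊢
      exact h1.image_closure
  -- image computations
  have himg_pos : ∀ a : ℝ, 0 ≤ a →
      (fun t => a / t) '' Set.Icc m M = Set.Icc (a / M) (a / m) := by
    intro a ha
    apply subset_antisymm
    · rintro _ ⟨t, ht, rfl⟩
      have ht0 : 0 < t := hm_pos.trans_le ht.1
      exact ⟨div_le_div_of_nonneg_left ha ht0 ht.2,
        div_le_div_of_nonneg_left ha hm_pos ht.1⟩
    · exact intermediate_value_Icc' hmM.le (hcont a)
  have himg_neg : ∀ a : ℝ, a ≤ 0 →
      (fun t => a / t) '' Set.Icc m M = Set.Icc (a / m) (a / M) := by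
    intro a ha
    apply subset_antisymm
    · rintro _ ⟨t, ht, rfl⟩
      have ht0 : 0 < t := hm_pos.trans_le ht.1
      constructor
      · rw [div_le_div_iff₀ hm_pos ht0]
        nlinarith [ht.1]
      · rw [div_le_div_iff₀ ht0 hM_pos]
        nlinarith [ht.2]
    · exact intermediate_value_Icc hmM.le (hcont a)
  -- sign facts
  have hc_neg : ∀ k : ℤ, k ≤ -1 → c k ≤ 0 := by
    intro k hk
    have : (k : ℝ) ≤ -1 := by exact_mod_cast hk
    simp only [hc_def]
    nlinarith
  have hc_nonneg : ∀ k : ℤ, 0 ≤ k → 0 ≤ c k := by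
    intro k hk
    have : (0:ℝ) ≤ (k : ℝ) := by exact_mod_cast hk
    simp only [hc_def]
    nlinarith
  -- local finiteness
  have hlf : LocallyFinite f := by
    intro y
    refine ⟨Set.Ioo (y - 1) (y + 1), Ioo_mem_nhds (by linarith) (by linarith), ?_⟩
    apply Set.Finite.subset (Set.finite_Icc
      ⌈(-(M * (|y| + 1)) - β) / (2 * Real.pi)⌉ ⌊(M * (|y| + 1) - β) / (2 * Real.pi)⌋)
    rintro k ⟨z, ⟨t, ⟨x, rfl⟩, rfl⟩, hz1, hz2⟩
    have ht : φ x ∈ Set.Icc m M := hrange ⟨x, rfl⟩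
    have ht0 : 0 < φ x := hm_pos.trans_le ht.1
    have hzabs : |c k / φ x| ≤ |y| + 1 := by
      rw [abs_le]
      constructor
      · have := neg_abs_le y; linarith
      · have := le_abs_self y; linarith
    have hck : |c k| ≤ M * (|y| + 1) := by
      rw [abs_div] at hzabs
      rw [abs_of_pos ht0] at hzabs
      have h1 : |c k| ≤ (|y| + 1) * φ x := by
        rw [div_le_iff₀ ht0] at hzabs; linarith
      calc |c k| ≤ (|y| + 1) * φ x := h1
        _ ≤ (|y| + 1) * M := by
            have : (0:ℝ) ≤ |y| + 1 := by positivity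
            nlinarith [ht.2]
        _ = M * (|y| + 1) := mul_comm _ _
    rw [abs_le] at hck
    constructor
    · rw [Int.ceil_le, div_le_iff₀ (by positivity)]
      simp only [hc_def] at hck
      nlinarith [hck.1]
    · rw [Int.le_floor, le_div_iff₀ (by positivity)]
      simp only [hc_def] at hck
      nlinarith [hck.2]
  rw [hset, hlf.closure_iUnion]
  ext y
  simp only [Set.mem_iUnion, Set.mem_union, Set.mem_setOf_eq]
  constructor
  · rintro ⟨k, hk⟩
    rcases le_or_gt k (-1) with h | h
    · exact Or.inl ⟨k, h, by rwa [hkey, himg_neg _ (hc_neg k h)] at hk⟩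
    · exact Or.inr ⟨k, by omega, by
        rwa [hkey, himg_pos _ (hc_nonneg k (by omega))] at hk⟩
  · rintro (⟨k, hk, hy⟩ | ⟨k, hk, hy⟩)
    · exact ⟨k, by rw [hkey, himg_neg _ (hc_neg k hk)]; exact hy⟩
    · exact ⟨k, by rw [hkey, himg_pos _ (hc_nonneg k hk)]; exact hy⟩
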